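/- Let f₁ and f₂ be functions in L²([0,1]) with respect to the Lebesgue measure. For a partition P given by 0 = a_0 < a_1 < … < a_l = 1, define S_P = ∑_{j=1}^l (∫_{a_{j-1}}^{a_j} f₁(x) dx)·(∫_{a_{j-1}}^{a_j} f₂(x) dx)/(a_j − a_{j-1}). Then the limit of S_P as the mesh ‖P‖ tends to 0 exists and equals ∫_0^1 f₁(x) f₂(x) dx; that is, for every ε > 0 there exists δ > 0 such that every partition with mesh < δ satisfies |S_P − ∫_0^1 f₁ f₂| < ε. -/

import Mathlib

open MeasureTheory Finset

/-- A partition of `[a,b]`: a finite increasing sequence `a = p 0 < p 1 < … < p l = b`. -/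
def IsPartition (a b : ℝ) (l : ℕ) (p : ℕ → ℝ) : Prop :=
  p 0 = a ∧ p l = b ∧ ∀ j, j < l → p j < p (j + 1)

open scoped ENNReal NNReal

lemma cs_integral {ν : Measure ℝ} {f g : ℝ → ℝ} (hf : MemLp f 2 ν) (hg : MemLp g 2 ν) :
    |∫ x, f x * g x ∂ν| ≤ Real.sqrt (∫ x, f x ^ 2 ∂ν) * Real.sqrt (∫ x, g x ^ 2 ∂ν) := by
  have h2 : ((2:ℝ≥0∞)) = ENNReal.ofReal (2:ℝ) := by norm_num
  have key := integral_mul_norm_le_Lp_mul_Lq (μ := ν) (Real.HolderConjugate.two_two)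
    (h2 ▸ hf) (h2 ▸ hg)
  have e1 : ∀ (h : ℝ → ℝ), (∫ x, ‖h x‖ ^ (2:ℝ) ∂ν) = ∫ x, h x ^ 2 ∂ν := by
    intro h; congr 1; funext x
    rw [show ((2:ℝ)) = ((2:ℕ):ℝ) by norm_num, Real.rpow_natCast]
    simp [sq_abs]
  have e2 : ∀ (h : ℝ → ℝ), ((∫ x, h x ^ 2 ∂ν) ^ ((1:ℝ)/2)) = Real.sqrt (∫ x, h x ^ 2 ∂ν) := by
    intro h
    rw [Real.sqrt_eq_rpow]
  calc |∫ x, f x * g x ∂ν| ≤ ∫ x, |f x * g x| ∂ν := by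
        simpa [Real.norm_eq_abs, abs_mul] using norm_integral_le_integral_norm (μ := ν) (f := fun x => f x * g x)
    _ = ∫ x, ‖f x‖ * ‖g x‖ ∂ν := by simp [abs_mul, Real.norm_eq_abs]
    _ ≤ (∫ x, ‖f x‖ ^ (2:ℝ) ∂ν) ^ ((1:ℝ)/2) * (∫ x, ‖g x‖ ^ (2:ℝ) ∂ν) ^ ((1:ℝ)/2) := key
    _ = Real.sqrt (∫ x, f x ^ 2 ∂ν) * Real.sqrt (∫ x, g x ^ 2 ∂ν) := by
        rw [e1 f, e1 g, e2 f, e2 g]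

-- restriction of MemLp from Icc 0 1 to a subinterval
lemma memLp_sub_interval {f : ℝ → ℝ} (hf : MemLp f 2 (volume.restrict (Set.Icc (0:ℝ) 1)))
    {a b : ℝ} (ha : 0 ≤ a) (hb : b ≤ 1) :
    MemLp f 2 (volume.restrict (Set.Ioc a b)) := by
  have hsub : Set.Ioc a b ⊆ Set.Icc (0:ℝ) 1 := fun x hx => ⟨le_trans ha hx.1.le, le_trans hx.2 hb⟩
  have : volume.restrict (Set.Ioc a b) =
      (volume.restrict (Set.Icc (0:ℝ) 1)).restrict (Set.Ioc a b) := by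
    rw [Measure.restrict_restrict measurableSet_Ioc, Set.inter_eq_left.mpr hsub]
  rw [this]
  exact hf.restrict _

-- interval Cauchy-Schwarz
lemma interval_cs {f : ℝ → ℝ} {a b : ℝ} (hab : a ≤ b)
    (hf : MemLp f 2 (volume.restrict (Set.Ioc a b))) :
    (∫ x in a..b, f x) ^ 2 ≤ (b - a) * ∫ x in a..b, f x ^ 2 := by
  haveI : IsFiniteMeasure (volume.restrict (Set.Ioc a b)) :=
    ⟨by rw [Measure.restrict_apply_univ, Real.volume_Ioc]; exact ENNReal.ofReal_lt_top⟩
  have h1 : MemLp (fun _ : ℝ => (1:ℝ)) 2 (volume.restrict (Set.Ioc a b)) := memLp_const 1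
  have key := cs_integral (f := f) (g := fun _ => (1:ℝ)) hf h1
  simp only [mul_one, one_pow] at key
  rw [integral_const, smul_eq_mul, mul_one, measureReal_def, Measure.restrict_apply_univ, Real.volume_Ioc,
    ENNReal.toReal_ofReal (by linarith : (0:ℝ) ≤ b - a)] at key
  have e2 : (∫ x in a..b, f x) = ∫ x in Set.Ioc a b, f x := by
    rw [intervalIntegral.integral_of_le hab]
  have e3 : (∫ x in a..b, f x ^ 2) = ∫ x in Set.Ioc a b, f x ^ 2 := by
    rw [intervalIntegral.integral_of_le hab]
  rw [e2, e3]
  have hnn : (0:ℝ) ≤ ∫ x in Set.Ioc a b, f x ^ 2 :=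
    integral_nonneg (fun x => sq_nonneg _)
  calc (∫ x in Set.Ioc a b, f x) ^ 2 = |∫ x in Set.Ioc a b, f x| ^ 2 := (sq_abs _).symm
    _ ≤ (Real.sqrt (∫ x in Set.Ioc a b, f x ^ 2) * Real.sqrt (b - a)) ^ 2 :=
        pow_le_pow_left₀ (abs_nonneg _) key 2
    _ = (b - a) * ∫ x in Set.Ioc a b, f x ^ 2 := by
        rw [mul_pow, Real.sq_sqrt hnn, Real.sq_sqrt (by linarith : (0:ℝ) ≤ b - a)]; ring

lemma partition_mono {l : ℕ} {p : ℕ → ℝ} (hP : IsPartition 0 1 l p) :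
    ∀ i j, i ≤ j → j ≤ l → p i ≤ p j := by
  intro i j hij hjl
  induction j with
  | zero => simp_all
  | succ k ih =>
    rcases Nat.eq_or_lt_of_le hij with h | h
    · rw [h]
    · exact le_trans (ih (Nat.lt_succ_iff.mp h) (le_trans (Nat.le_succ k) hjl))
        (hP.2.2 k (Nat.lt_of_succ_le hjl)).le

lemma partition_mem {l : ℕ} {p : ℕ → ℝ} (hP : IsPartition 0 1 l p) {j : ℕ} (hj : j ≤ l) :
    0 ≤ p j ∧ p j ≤ 1 := by
  constructor
  · have := partition_mono hP 0 j (Nat.zero_le j) hj; rwa [hP.1] at this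
  · have := partition_mono hP j l hj le_rfl; rwa [hP.2.1] at this

-- integrability of f on Icc 0 1 from MemLp 2
lemma integrableOn_of_memLp {f : ℝ → ℝ} (hf : MemLp f 2 (volume.restrict (Set.Icc (0:ℝ) 1))) :
    IntegrableOn f (Set.Icc (0:ℝ) 1) volume := by
  haveI : IsFiniteMeasure (volume.restrict (Set.Icc (0:ℝ) 1)) :=
    ⟨by rw [Measure.restrict_apply_univ, Real.volume_Icc]; exact ENNReal.ofReal_lt_top⟩
  exact memLp_one_iff_integrable.mp (hf.mono_exponent (by norm_num))

lemma intervalIntegrable_of_integrableOn {f : ℝ → ℝ}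
    (hf : IntegrableOn f (Set.Icc (0:ℝ) 1) volume) {a b : ℝ}
    (ha : 0 ≤ a) (hab : a ≤ b) (hb : b ≤ 1) : IntervalIntegrable f volume a b := by
  apply IntegrableOn.intervalIntegrable
  apply hf.mono_set
  rw [Set.uIcc_of_le hab]
  exact fun x hx => ⟨le_trans ha hx.1, le_trans hx.2 hb⟩

-- telescoping
lemma partition_sum_integral {f : ℝ → ℝ} (hf : IntegrableOn f (Set.Icc (0:ℝ) 1) volume)
    {l : ℕ} {p : ℕ → ℝ} (hP : IsPartition 0 1 l p) :
    ∑ j ∈ Finset.range l, (∫ x in p j..p (j+1), f x) = ∫ x in (0:ℝ)..1, f x := by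
  have h := intervalIntegral.sum_integral_adjacent_intervals (μ := volume) (f := f) (a := p) (n := l)
    (fun k hk => intervalIntegrable_of_integrableOn hf
      (partition_mem hP (le_of_lt hk)).1 (hP.2.2 k hk).le (partition_mem hP hk).2)
  rw [h, hP.1, hP.2.1]

-- key bound: |S_P(f,g)| ≤ ‖f‖₂ ‖g‖₂
lemma sp_bound {f g : ℝ → ℝ} (hf : MemLp f 2 (volume.restrict (Set.Icc (0:ℝ) 1)))
    (hg : MemLp g 2 (volume.restrict (Set.Icc (0:ℝ) 1)))
    {l : ℕ} {p : ℕ → ℝ} (hP : IsPartition 0 1 l p) :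
    |∑ j ∈ Finset.range l,
        (∫ x in p j..p (j + 1), f x) * (∫ x in p j..p (j + 1), g x) / (p (j + 1) - p j)|
      ≤ Real.sqrt (∫ x in (0:ℝ)..1, f x ^ 2) * Real.sqrt (∫ x in (0:ℝ)..1, g x ^ 2) := by
  set Δ : ℕ → ℝ := fun j => p (j + 1) - p j with hΔ
  have hΔpos : ∀ j, j < l → 0 < Δ j := fun j hj => sub_pos.mpr (hP.2.2 j hj)
  set u : ℕ → ℝ := fun j => |∫ x in p j..p (j + 1), f x| / Real.sqrt (Δ j) with hu
  set v : ℕ → ℝ := fun j => |∫ x in p j..p (j + 1), g x| / Real.sqrt (Δ j) with hv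
  have step1 : |∑ j ∈ Finset.range l,
      (∫ x in p j..p (j + 1), f x) * (∫ x in p j..p (j + 1), g x) / (p (j + 1) - p j)|
      ≤ ∑ j ∈ Finset.range l, u j * v j := by
    refine le_trans (Finset.abs_sum_le_sum_abs _ _) (Finset.sum_le_sum fun j hj => ?_)
    have hj' := Finset.mem_range.mp hj
    have h0 := hΔpos j hj'
    have hsq : Real.sqrt (Δ j) * Real.sqrt (Δ j) = Δ j := Real.mul_self_sqrt h0.le
    rw [hu, hv]
    rw [abs_div, abs_mul, abs_of_pos h0]
    rw [div_mul_div_comm, hsq]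
  have sq_term : ∀ (h : ℝ → ℝ) j, j < l →
      (|∫ x in p j..p (j + 1), h x| / Real.sqrt (Δ j)) ^ 2
        = (∫ x in p j..p (j + 1), h x) ^ 2 / Δ j := by
    intro h j hj
    rw [div_pow, sq_abs, Real.sq_sqrt (hΔpos j hj).le]
  have sum_sq_le : ∀ (h : ℝ → ℝ), MemLp h 2 (volume.restrict (Set.Icc (0:ℝ) 1)) →
      ∑ j ∈ Finset.range l, (|∫ x in p j..p (j + 1), h x| / Real.sqrt (Δ j)) ^ 2
        ≤ ∫ x in (0:ℝ)..1, h x ^ 2 := by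
    intro h hh
    have hsq : IntegrableOn (fun x => h x ^ 2) (Set.Icc (0:ℝ) 1) volume := hh.integrable_sq
    calc ∑ j ∈ Finset.range l, (|∫ x in p j..p (j + 1), h x| / Real.sqrt (Δ j)) ^ 2
        ≤ ∑ j ∈ Finset.range l, ∫ x in p j..p (j + 1), h x ^ 2 := by
          refine Finset.sum_le_sum fun j hj => ?_
          have hj' := Finset.mem_range.mp hj
          rw [sq_term h j hj']
          rw [div_le_iff₀ (hΔpos j hj')]
          have := interval_cs (f := h) (hP.2.2 j hj').le
            (memLp_sub_interval hh (partition_mem hP hj'.le).1 (partition_mem hP hj').2)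
          simpa [hΔ, mul_comm] using this
      _ = ∫ x in (0:ℝ)..1, h x ^ 2 := partition_sum_integral hsq hP
  have unn : ∀ j, 0 ≤ u j := fun j => div_nonneg (abs_nonneg _) (Real.sqrt_nonneg _)
  have vnn : ∀ j, 0 ≤ v j := fun j => div_nonneg (abs_nonneg _) (Real.sqrt_nonneg _)
  have step2 : ∑ j ∈ Finset.range l, u j * v j ≤
      Real.sqrt (∑ j ∈ Finset.range l, u j ^ 2) * Real.sqrt (∑ j ∈ Finset.range l, v j ^ 2) := by
    have cs := Finset.sum_mul_sq_le_sq_mul_sq (Finset.range l) u v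
    have hnn : 0 ≤ ∑ j ∈ Finset.range l, u j * v j :=
      Finset.sum_nonneg fun j _ => mul_nonneg (unn j) (vnn j)
    calc ∑ j ∈ Finset.range l, u j * v j
        = Real.sqrt ((∑ j ∈ Finset.range l, u j * v j) ^ 2) := (Real.sqrt_sq hnn).symm
      _ ≤ Real.sqrt ((∑ j ∈ Finset.range l, u j ^ 2) * ∑ j ∈ Finset.range l, v j ^ 2) :=
          Real.sqrt_le_sqrt cs
      _ = _ := Real.sqrt_mul (Finset.sum_nonneg fun j _ => sq_nonneg _) _
  refine le_trans step1 (le_trans step2 ?_)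
  gcongr
  · exact sum_sq_le f hf
  · exact sum_sq_le g hg

-- the continuous case
lemma sp_continuous {g₁ g₂ : ℝ → ℝ} (hc₁ : Continuous g₁) (hc₂ : Continuous g₂) :
    ∀ ε > (0 : ℝ), ∃ δ > (0 : ℝ), ∀ (l : ℕ) (p : ℕ → ℝ),
      IsPartition 0 1 l p → (∀ j, j < l → p (j + 1) - p j < δ) →
      |(∑ j ∈ Finset.range l,
          (∫ x in p j..p (j + 1), g₁ x) * (∫ x in p j..p (j + 1), g₂ x) / (p (j + 1) - p j))
        - ∫ x in (0:ℝ)..1, g₁ x * g₂ x| < ε := by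
  intro ε hε
  obtain ⟨M₁, hM₁⟩ := (isCompact_Icc (a := (0:ℝ)) (b := 1)).exists_bound_of_continuousOn
    hc₁.continuousOn
  obtain ⟨M₂, hM₂⟩ := (isCompact_Icc (a := (0:ℝ)) (b := 1)).exists_bound_of_continuousOn
    hc₂.continuousOn
  have hM₁0 : 0 ≤ M₁ := le_trans (norm_nonneg _) (hM₁ 0 (by norm_num))
  have hM₂0 : 0 ≤ M₂ := le_trans (norm_nonneg _) (hM₂ 0 (by norm_num))
  set ω : ℝ := ε / (2 * (M₁ + M₂ + 1)) with hω
  have hωpos : 0 < ω := div_pos hε (by linarith)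
  obtain ⟨δ₁, hδ₁pos, hδ₁⟩ := Metric.uniformContinuousOn_iff.mp
    (isCompact_Icc.uniformContinuousOn_of_continuous hc₁.continuousOn
      (s := Set.Icc (0:ℝ) 1)) ω hωpos
  obtain ⟨δ₂, hδ₂pos, hδ₂⟩ := Metric.uniformContinuousOn_iff.mp
    (isCompact_Icc.uniformContinuousOn_of_continuous hc₂.continuousOn
      (s := Set.Icc (0:ℝ) 1)) ω hωpos
  refine ⟨min δ₁ δ₂, lt_min hδ₁pos hδ₂pos, fun l p hP hmesh => ?_⟩
  have key : ∀ j, j < l →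
      |(∫ x in p j..p (j + 1), g₁ x) * (∫ x in p j..p (j + 1), g₂ x) / (p (j + 1) - p j)
        - ∫ x in p j..p (j + 1), g₁ x * g₂ x| ≤ (M₁ + M₂) * ω * (p (j + 1) - p j) := by
    intro j hj
    set a := p j
    set b := p (j + 1)
    have hab : a < b := hP.2.2 j hj
    have hΔ : 0 < b - a := sub_pos.mpr hab
    have ha0 : 0 ≤ a := (partition_mem hP hj.le).1
    have hb1 : b ≤ 1 := (partition_mem hP hj).2
    have hsub : Set.uIoc a b ⊆ Set.Icc (0:ℝ) 1 := by
      rw [Set.uIoc_of_le hab.le]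
      exact fun x hx => ⟨le_trans ha0 hx.1.le, le_trans hx.2 hb1⟩
    set A₁ := (∫ x in a..b, g₁ x) / (b - a) with hA₁
    set A₂ := (∫ x in a..b, g₂ x) / (b - a) with hA₂
    have havg : ∀ (g : ℝ → ℝ) (M δ' : ℝ), Continuous g → (∀ x ∈ Set.Icc (0:ℝ) 1, ‖g x‖ ≤ M) →
        (b - a < δ') →
        (∀ x ∈ Set.Icc (0:ℝ) 1, ∀ y ∈ Set.Icc (0:ℝ) 1, dist x y < δ' → dist (g x) (g y) < ω) →
        (|(∫ x in a..b, g x) / (b - a)| ≤ M ∧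
          ∀ x ∈ Set.uIoc a b, |(∫ x in a..b, g x) / (b - a) - g x| ≤ ω) := by
      intro g M δ' hgc hgM hδ' hgu
      constructor
      · rw [abs_div, abs_of_pos hΔ, div_le_iff₀ hΔ]
        calc |∫ x in a..b, g x| ≤ M * |b - a| :=
            intervalIntegral.norm_integral_le_of_norm_le_const fun x hx => hgM x (hsub hx)
          _ = M * (b - a) := by rw [abs_of_pos hΔ]
      · intro x hx
        have hgint : IntervalIntegrable g volume a b := hgc.intervalIntegrable a b
        have e : (∫ y in a..b, g y) / (b - a) - g x
            = (∫ y in a..b, (g y - g x)) / (b - a) := by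
          rw [intervalIntegral.integral_sub hgint (intervalIntegrable_const)]
          rw [intervalIntegral.integral_const, smul_eq_mul]
          field_simp
        rw [e, abs_div, abs_of_pos hΔ, div_le_iff₀ hΔ]
        have hbd : ∀ y ∈ Set.uIoc a b, ‖g y - g x‖ ≤ ω := by
          intro y hy
          have hyI : y ∈ Set.Icc (0:ℝ) 1 := hsub hy
          have hxI : x ∈ Set.Icc (0:ℝ) 1 := hsub hx
          have hdist : dist y x < δ' := by
            rw [Set.uIoc_of_le hab.le] at hx hy
            rw [Real.dist_eq]
            have h1 : |y - x| ≤ b - a := by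
              rw [abs_sub_le_iff]; constructor <;> [linarith [hy.1, hy.2, hx.1, hx.2]; linarith [hy.1, hy.2, hx.1, hx.2]]
            linarith
          simpa [Real.dist_eq] using (le_of_lt (hgu y hyI x hxI hdist))
        calc |∫ y in a..b, (g y - g x)|
            ≤ ω * |b - a| := intervalIntegral.norm_integral_le_of_norm_le_const hbd
          _ = ω * (b - a) := by rw [abs_of_pos hΔ]
    have h₁ := havg g₁ M₁ δ₁ hc₁ hM₁ (lt_of_lt_of_le (hmesh j hj) (min_le_left _ _)) hδ₁
    have h₂ := havg g₂ M₂ δ₂ hc₂ hM₂ (lt_of_lt_of_le (hmesh j hj) (min_le_right _ _)) hδ₂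
    have e : (∫ x in a..b, g₁ x) * (∫ x in a..b, g₂ x) / (b - a)
        - (∫ x in a..b, g₁ x * g₂ x) = ∫ x in a..b, (A₁ * A₂ - g₁ x * g₂ x) := by
      rw [intervalIntegral.integral_sub (g := fun x => g₁ x * g₂ x) intervalIntegrable_const
        ((hc₁.mul hc₂).intervalIntegrable a b)]
      rw [intervalIntegral.integral_const, smul_eq_mul, hA₁, hA₂]
      field_simp
    rw [e]
    have hbd : ∀ x ∈ Set.uIoc a b, ‖A₁ * A₂ - g₁ x * g₂ x‖ ≤ (M₁ + M₂) * ω := by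
      intro x hx
      have hxI : x ∈ Set.Icc (0:ℝ) 1 := hsub hx
      have b1 : |A₁| ≤ M₁ := h₁.1
      have b2 : |A₂ - g₂ x| ≤ ω := h₂.2 x hx
      have b3 : |A₁ - g₁ x| ≤ ω := h₁.2 x hx
      have b4 : |g₂ x| ≤ M₂ := by simpa [Real.norm_eq_abs] using hM₂ x hxI
      have eq1 : A₁ * A₂ - g₁ x * g₂ x = A₁ * (A₂ - g₂ x) + (A₁ - g₁ x) * g₂ x := by ring
      rw [Real.norm_eq_abs, eq1]
      calc |A₁ * (A₂ - g₂ x) + (A₁ - g₁ x) * g₂ x|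
          ≤ |A₁ * (A₂ - g₂ x)| + |(A₁ - g₁ x) * g₂ x| := abs_add_le _ _
        _ = |A₁| * |A₂ - g₂ x| + |A₁ - g₁ x| * |g₂ x| := by rw [abs_mul, abs_mul]
        _ ≤ M₁ * ω + ω * M₂ := add_le_add
            (mul_le_mul b1 b2 (abs_nonneg _) hM₁0)
            (mul_le_mul b3 b4 (abs_nonneg _) hωpos.le)
        _ = (M₁ + M₂) * ω := by ring
    calc |∫ x in a..b, (A₁ * A₂ - g₁ x * g₂ x)|
        ≤ (M₁ + M₂) * ω * |b - a| := intervalIntegral.norm_integral_le_of_norm_le_const hbd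
      _ = (M₁ + M₂) * ω * (b - a) := by rw [abs_of_pos hΔ]
  have hint : IntegrableOn (fun x => g₁ x * g₂ x) (Set.Icc (0:ℝ) 1) volume :=
    (hc₁.mul hc₂).integrableOn_Icc
  rw [← partition_sum_integral hint hP, ← Finset.sum_sub_distrib]
  have hsum : ∑ j ∈ Finset.range l, (p (j + 1) - p j) = 1 := by
    rw [Finset.sum_range_sub (f := p), hP.1, hP.2.1]; ring
  calc |∑ j ∈ Finset.range l,
        ((∫ x in p j..p (j + 1), g₁ x) * (∫ x in p j..p (j + 1), g₂ x) / (p (j + 1) - p j)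
          - ∫ x in p j..p (j + 1), g₁ x * g₂ x)|
      ≤ ∑ j ∈ Finset.range l,
        |(∫ x in p j..p (j + 1), g₁ x) * (∫ x in p j..p (j + 1), g₂ x) / (p (j + 1) - p j)
          - ∫ x in p j..p (j + 1), g₁ x * g₂ x| := Finset.abs_sum_le_sum_abs _ _
    _ ≤ ∑ j ∈ Finset.range l, (M₁ + M₂) * ω * (p (j + 1) - p j) :=
        Finset.sum_le_sum fun j hj => key j (Finset.mem_range.mp hj)
    _ = (M₁ + M₂) * ω := by rw [← Finset.mul_sum, hsum, mul_one]
    _ < ε := by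
        have hD : (0:ℝ) < 2 * (M₁ + M₂ + 1) := by linarith
        have h2 : (M₁ + M₂) * ω < (2 * (M₁ + M₂ + 1)) * ω :=
          mul_lt_mul_of_pos_right (by linarith) hωpos
        have h3 : (2 * (M₁ + M₂ + 1)) * ω = ε := by rw [hω]; field_simp
        linarith

-- L² approximation by continuous functions
lemma approx_continuous {f : ℝ → ℝ} (hf : MemLp f 2 (volume.restrict (Set.Icc (0:ℝ) 1)))
    {η : ℝ} (hη : 0 < η) :
    ∃ g : ℝ → ℝ, Continuous g ∧ MemLp g 2 (volume.restrict (Set.Icc (0:ℝ) 1)) ∧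
      Real.sqrt (∫ x in (0:ℝ)..1, (f x - g x) ^ 2) ≤ η := by
  set F := Set.indicator (Set.Icc (0:ℝ) 1) f with hF
  have hFm : AEStronglyMeasurable F volume :=
    (aestronglyMeasurable_indicator_iff measurableSet_Icc).mpr hf.1
  have hFlp : MemLp F 2 volume := by
    refine ⟨hFm, ?_⟩
    rw [hF, eLpNorm_indicator_eq_eLpNorm_restrict measurableSet_Icc]
    exact hf.2
  obtain ⟨g, hgsupp, hgsub, hgc, hglp⟩ := hFlp.exists_hasCompactSupport_eLpNorm_sub_le
    ENNReal.ofNat_ne_top (ε := ENNReal.ofReal η) (by simp [ENNReal.ofReal_eq_zero]; linarith)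
  refine ⟨g, hgc, ?_, ?_⟩
  · haveI : IsFiniteMeasure (volume.restrict (Set.Icc (0:ℝ) 1)) :=
      ⟨by rw [Measure.restrict_apply_univ, Real.volume_Icc]; exact ENNReal.ofReal_lt_top⟩
    exact hgc.memLp_of_hasCompactSupport hgsupp
  · -- the eLpNorm bound transfers
    set μ' := volume.restrict (Set.Ioc (0:ℝ) 1) with hμ'
    have hcongr : (fun x => f x - g x) =ᵐ[μ'] (F - g) := by
      filter_upwards [ae_restrict_mem measurableSet_Ioc] with x hx
      simp [hF, Set.indicator_of_mem (Set.Ioc_subset_Icc_self hx)]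
    have h1 : eLpNorm (fun x => f x - g x) 2 μ' ≤ ENNReal.ofReal η := by
      rw [eLpNorm_congr_ae hcongr]
      exact le_trans (eLpNorm_mono_measure _ Measure.restrict_le_self) hgsub
    have hmem : MemLp (fun x => f x - g x) 2 μ' := by
      have hfμ' : MemLp f 2 μ' := memLp_sub_interval hf le_rfl le_rfl
      have hgμ' : MemLp g 2 μ' := by
        haveI : IsFiniteMeasure μ' :=
          ⟨by rw [hμ', Measure.restrict_apply_univ, Real.volume_Ioc]; exact ENNReal.ofReal_lt_top⟩
        exact hgc.memLp_of_hasCompactSupport hgsupp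
      exact hfμ'.sub hgμ'
    have heq := hmem.eLpNorm_eq_integral_rpow_norm (by norm_num) ENNReal.ofNat_ne_top
    rw [heq] at h1
    have htoReal : ((2:ℝ≥0∞)).toReal = (2:ℝ) := by norm_num
    rw [htoReal] at h1
    have hXnn : 0 ≤ (∫ a, ‖f a - g a‖ ^ (2:ℝ) ∂μ') ^ ((2:ℝ)⁻¹) :=
      Real.rpow_nonneg (integral_nonneg fun x => Real.rpow_nonneg (norm_nonneg _) _) _
    have hX := (ENNReal.ofReal_le_ofReal_iff hη.le).mp h1
    have e1 : (∫ a, ‖f a - g a‖ ^ (2:ℝ) ∂μ') = ∫ a, (f a - g a) ^ 2 ∂μ' := by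
      congr 1; funext x
      rw [show ((2:ℝ)) = ((2:ℕ):ℝ) by norm_num, Real.rpow_natCast]
      simp [sq_abs]
    have e2 : (∫ x in (0:ℝ)..1, (f x - g x) ^ 2) = ∫ a, (f a - g a) ^ 2 ∂μ' := by
      rw [intervalIntegral.integral_of_le (by norm_num : (0:ℝ) ≤ 1)]
    rw [e2, Real.sqrt_eq_rpow, one_div]
    rw [e1] at hX
    exact hX

lemma integrable_mul_of_memLp {ν : Measure ℝ} {f g : ℝ → ℝ}
    (hf : MemLp f 2 ν) (hg : MemLp g 2 ν) : Integrable (fun x => f x * g x) ν := by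
  refine Integrable.mono' (((hf.integrable_sq.add hg.integrable_sq).div_const 2))
    (hf.1.mul hg.1) (ae_of_all _ fun x => ?_)
  rw [Real.norm_eq_abs, abs_mul]
  simp only [Pi.add_apply]
  nlinarith [sq_nonneg (|f x| - |g x|), sq_abs (f x), sq_abs (g x), abs_nonneg (f x), abs_nonneg (g x)]

/-- For `f₁, f₂ ∈ L²([0,1])`, the partition sums
`S_P = ∑_j (∫_{a_{j-1}}^{a_j} f₁)(∫_{a_{j-1}}^{a_j} f₂)/(a_j - a_{j-1})`
converge to `∫_0^1 f₁ f₂` as the mesh `‖P‖ → 0`. -/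
theorem partition_sum_tendsto_inner_product
    (f₁ f₂ : ℝ → ℝ)
    (hf₁ : MemLp f₁ 2 (volume.restrict (Set.Icc (0 : ℝ) 1)))
    (hf₂ : MemLp f₂ 2 (volume.restrict (Set.Icc (0 : ℝ) 1))) :
    ∀ ε > (0 : ℝ), ∃ δ > (0 : ℝ), ∀ (l : ℕ) (p : ℕ → ℝ),
      IsPartition 0 1 l p → (∀ j, j < l → p (j + 1) - p j < δ) →
      |(∑ j ∈ Finset.range l,
          (∫ x in p j..p (j + 1), f₁ x) * (∫ x in p j..p (j + 1), f₂ x) / (p (j + 1) - p j))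
        - ∫ x in (0:ℝ)..1, f₁ x * f₂ x| < ε := by
  intro ε hε
  set N₁ := Real.sqrt (∫ x in (0:ℝ)..1, f₁ x ^ 2) with hN₁
  set N₂ := Real.sqrt (∫ x in (0:ℝ)..1, f₂ x ^ 2) with hN₂
  have hN₁0 : 0 ≤ N₁ := Real.sqrt_nonneg _
  have hN₂0 : 0 ≤ N₂ := Real.sqrt_nonneg _
  have hK : (0:ℝ) < N₁ + N₂ + 1 := by linarith
  set η : ℝ := min 1 (ε / (3 * (N₁ + N₂ + 1))) with hη
  have hηpos : 0 < η := lt_min one_pos (div_pos hε (by linarith))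
  have hη1 : η ≤ 1 := min_le_left _ _
  have hη2 : η * (N₁ + N₂ + 1) ≤ ε / 3 := by
    have h := min_le_right 1 (ε / (3 * (N₁ + N₂ + 1)))
    calc η * (N₁ + N₂ + 1) ≤ (ε / (3 * (N₁ + N₂ + 1))) * (N₁ + N₂ + 1) :=
          mul_le_mul_of_nonneg_right h hK.le
      _ = ε / 3 := by field_simp
  obtain ⟨g₁, hc₁, hg₁lp, hg₁close⟩ := approx_continuous hf₁ hηpos
  obtain ⟨g₂, hc₂, hg₂lp, hg₂close⟩ := approx_continuous hf₂ hηpos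
  obtain ⟨δ, hδpos, hδ⟩ := sp_continuous hc₁ hc₂ (ε/3) (by linarith)
  refine ⟨δ, hδpos, fun l p hP hmesh => ?_⟩
  -- basic integrability facts
  have hf₁i := integrableOn_of_memLp hf₁
  have hf₂i := integrableOn_of_memLp hf₂
  have hg₁i := integrableOn_of_memLp hg₁lp
  have hg₂i := integrableOn_of_memLp hg₂lp
  have hIf₁ : ∀ j, j < l → IntervalIntegrable f₁ volume (p j) (p (j+1)) := fun j hj =>
    intervalIntegrable_of_integrableOn hf₁i (partition_mem hP hj.le).1 (hP.2.2 j hj).le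
      (partition_mem hP hj).2
  have hIf₂ : ∀ j, j < l → IntervalIntegrable f₂ volume (p j) (p (j+1)) := fun j hj =>
    intervalIntegrable_of_integrableOn hf₂i (partition_mem hP hj.le).1 (hP.2.2 j hj).le
      (partition_mem hP hj).2
  have hIg₁ : ∀ j, j < l → IntervalIntegrable g₁ volume (p j) (p (j+1)) := fun j _ =>
    hc₁.intervalIntegrable _ _
  have hIg₂ : ∀ j, j < l → IntervalIntegrable g₂ volume (p j) (p (j+1)) := fun j _ =>
    hc₂.intervalIntegrable _ _
  have hd₁lp : MemLp (fun x => f₁ x - g₁ x) 2 (volume.restrict (Set.Icc (0:ℝ) 1)) :=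
    hf₁.sub hg₁lp
  have hd₂lp : MemLp (fun x => f₂ x - g₂ x) 2 (volume.restrict (Set.Icc (0:ℝ) 1)) :=
    hf₂.sub hg₂lp
  -- partition sums
  set S : (ℝ → ℝ) → (ℝ → ℝ) → ℝ := fun u v => ∑ j ∈ Finset.range l,
      (∫ x in p j..p (j + 1), u x) * (∫ x in p j..p (j + 1), v x) / (p (j + 1) - p j) with hS
  -- decomposition of the partition sum
  have hdecompS : S f₁ f₂ - S g₁ g₂
      = S (fun x => f₁ x - g₁ x) f₂ + S f₁ (fun x => f₂ x - g₂ x)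
        - S (fun x => f₁ x - g₁ x) (fun x => f₂ x - g₂ x) := by
    rw [hS]
    simp only [← Finset.sum_sub_distrib, ← Finset.sum_add_distrib]
    refine Finset.sum_congr rfl fun j hj => ?_
    have hj' := Finset.mem_range.mp hj
    rw [intervalIntegral.integral_sub (hIf₁ j hj') (hIg₁ j hj'),
      intervalIntegral.integral_sub (hIf₂ j hj') (hIg₂ j hj')]
    ring
  -- decomposition of the integral
  have hmul : ∀ (u v : ℝ → ℝ), MemLp u 2 (volume.restrict (Set.Icc (0:ℝ) 1)) →
      MemLp v 2 (volume.restrict (Set.Icc (0:ℝ) 1)) →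
      IntervalIntegrable (fun x => u x * v x) volume 0 1 := by
    intro u v hu hv
    exact intervalIntegrable_of_integrableOn (integrable_mul_of_memLp hu hv)
      le_rfl (by norm_num) le_rfl
  have hdecompI : (∫ x in (0:ℝ)..1, f₁ x * f₂ x) - (∫ x in (0:ℝ)..1, g₁ x * g₂ x)
      = (∫ x in (0:ℝ)..1, (f₁ x - g₁ x) * f₂ x) + (∫ x in (0:ℝ)..1, f₁ x * (f₂ x - g₂ x))
        - (∫ x in (0:ℝ)..1, (f₁ x - g₁ x) * (f₂ x - g₂ x)) := by
    rw [← intervalIntegral.integral_sub (hmul f₁ f₂ hf₁ hf₂) (hmul g₁ g₂ hg₁lp hg₂lp),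
      ← intervalIntegral.integral_add (hmul _ f₂ hd₁lp hf₂) (hmul f₁ _ hf₁ hd₂lp),
      ← intervalIntegral.integral_sub
        ((hmul _ f₂ hd₁lp hf₂).add (hmul f₁ _ hf₁ hd₂lp)) (hmul _ _ hd₁lp hd₂lp)]
    congr 1; funext x; ring
  -- bounds on the S terms
  have hb1 : |S (fun x => f₁ x - g₁ x) f₂|
      ≤ Real.sqrt (∫ x in (0:ℝ)..1, (f₁ x - g₁ x) ^ 2) * N₂ := sp_bound hd₁lp hf₂ hP
  have hb2 : |S f₁ (fun x => f₂ x - g₂ x)|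
      ≤ N₁ * Real.sqrt (∫ x in (0:ℝ)..1, (f₂ x - g₂ x) ^ 2) := sp_bound hf₁ hd₂lp hP
  have hb3 : |S (fun x => f₁ x - g₁ x) (fun x => f₂ x - g₂ x)|
      ≤ Real.sqrt (∫ x in (0:ℝ)..1, (f₁ x - g₁ x) ^ 2)
        * Real.sqrt (∫ x in (0:ℝ)..1, (f₂ x - g₂ x) ^ 2) := sp_bound hd₁lp hd₂lp hP
  -- bounds on the integral terms
  set μ' := volume.restrict (Set.Ioc (0:ℝ) 1) with hμ'
  have hconv : ∀ (u : ℝ → ℝ), (∫ x in (0:ℝ)..1, u x) = ∫ x, u x ∂μ' := fun u => by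
    rw [intervalIntegral.integral_of_le (by norm_num : (0:ℝ) ≤ 1)]
  have hmem' : ∀ (u : ℝ → ℝ), MemLp u 2 (volume.restrict (Set.Icc (0:ℝ) 1)) → MemLp u 2 μ' :=
    fun u hu => memLp_sub_interval hu le_rfl le_rfl
  have hcs : ∀ (u v : ℝ → ℝ), MemLp u 2 (volume.restrict (Set.Icc (0:ℝ) 1)) →
      MemLp v 2 (volume.restrict (Set.Icc (0:ℝ) 1)) →
      |∫ x in (0:ℝ)..1, u x * v x|
        ≤ Real.sqrt (∫ x in (0:ℝ)..1, u x ^ 2) * Real.sqrt (∫ x in (0:ℝ)..1, v x ^ 2) := by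
    intro u v hu hv
    rw [hconv (fun x => u x * v x), hconv (fun x => u x ^ 2), hconv (fun x => v x ^ 2)]
    exact cs_integral (hmem' u hu) (hmem' v hv)
  have hb4 : |∫ x in (0:ℝ)..1, (f₁ x - g₁ x) * f₂ x|
      ≤ Real.sqrt (∫ x in (0:ℝ)..1, (f₁ x - g₁ x) ^ 2) * N₂ := hcs _ _ hd₁lp hf₂
  have hb5 : |∫ x in (0:ℝ)..1, f₁ x * (f₂ x - g₂ x)|
      ≤ N₁ * Real.sqrt (∫ x in (0:ℝ)..1, (f₂ x - g₂ x) ^ 2) := hcs _ _ hf₁ hd₂lp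
  have hb6 : |∫ x in (0:ℝ)..1, (f₁ x - g₁ x) * (f₂ x - g₂ x)|
      ≤ Real.sqrt (∫ x in (0:ℝ)..1, (f₁ x - g₁ x) ^ 2)
        * Real.sqrt (∫ x in (0:ℝ)..1, (f₂ x - g₂ x) ^ 2) := hcs _ _ hd₁lp hd₂lp
  have hbc : |S g₁ g₂ - ∫ x in (0:ℝ)..1, g₁ x * g₂ x| < ε / 3 := hδ l p hP hmesh
  -- combine
  set D₁ := Real.sqrt (∫ x in (0:ℝ)..1, (f₁ x - g₁ x) ^ 2) with hD₁
  set D₂ := Real.sqrt (∫ x in (0:ℝ)..1, (f₂ x - g₂ x) ^ 2) with hD₂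
  have hD₁0 : 0 ≤ D₁ := Real.sqrt_nonneg _
  have hD₂0 : 0 ≤ D₂ := Real.sqrt_nonneg _
  have hfinal : |S f₁ f₂ - ∫ x in (0:ℝ)..1, f₁ x * f₂ x| < ε := by
    have key : S f₁ f₂ - (∫ x in (0:ℝ)..1, f₁ x * f₂ x)
        = (S (fun x => f₁ x - g₁ x) f₂ + S f₁ (fun x => f₂ x - g₂ x)
            - S (fun x => f₁ x - g₁ x) (fun x => f₂ x - g₂ x))
          + (S g₁ g₂ - ∫ x in (0:ℝ)..1, g₁ x * g₂ x)
          - ((∫ x in (0:ℝ)..1, (f₁ x - g₁ x) * f₂ x) + (∫ x in (0:ℝ)..1, f₁ x * (f₂ x - g₂ x))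
            - (∫ x in (0:ℝ)..1, (f₁ x - g₁ x) * (f₂ x - g₂ x))) := by
      linarith [hdecompS, hdecompI]
    have e1 : D₁ * N₂ ≤ η * N₂ := mul_le_mul_of_nonneg_right hg₁close hN₂0
    have e2 : N₁ * D₂ ≤ N₁ * η := mul_le_mul_of_nonneg_left hg₂close hN₁0
    have e3 : D₁ * D₂ ≤ η * η := mul_le_mul hg₁close hg₂close hD₂0 hηpos.le
    have e4 : η * N₂ + N₁ * η + η * η ≤ η * (N₁ + N₂ + 1) := by nlinarith
    have t1 := abs_le.mp hb1
    have t2 := abs_le.mp hb2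
    have t3 := abs_le.mp hb3
    have t4 := abs_le.mp hb4
    have t5 := abs_le.mp hb5
    have t6 := abs_le.mp hb6
    have tc := abs_lt.mp hbc
    rw [key, abs_lt]
    constructor <;> linarith
  exact hfinal
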